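/- Let l ≥ 1 be an integer and let m₀, m₂, m₃ be real numbers with m₀, m₂, m₃ ≥ 1. Then for every integer i with 2 ≤ i ≤ 3l, the coefficient of x^i in the polynomial (m₃x³ + m₂x² + m₀)^l is at least 1. -/
import Mathlib


open Polynomial

theorem coeff_of_positive_part_ge_one
    (l : ℕ) (hl : 1 ≤ l)
    (m₀ m₂ m₃ : ℝ) (hm₀ : 1 ≤ m₀) (hm₂ : 1 ≤ m₂) (hm₃ : 1 ≤ m₃) :
    ∀ i : ℕ, 2 ≤ i → i ≤ 3 * l →
      1 ≤ ((C m₃ * X ^ 3 + C m₂ * X ^ 2 + C m₀) ^ l).coeff i := by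
  have hm₀' : (0:ℝ) ≤ m₀ := le_trans zero_le_one hm₀
  have hm₂' : (0:ℝ) ≤ m₂ := le_trans zero_le_one hm₂
  have hm₃' : (0:ℝ) ≤ m₃ := le_trans zero_le_one hm₃
  set P : ℝ[X] := C m₃ * X ^ 3 + C m₂ * X ^ 2 + C m₀ with hP
  have base : ∀ i, P.coeff i =
      (if i = 3 then m₃ else 0) + (if i = 2 then m₂ else 0)
        + (if i = 0 then m₀ else 0) := by
    intro i
    simp [hP, coeff_X_pow, coeff_C, mul_ite]
  have key : ∀ n : ℕ, 1 ≤ n →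
      (∀ i, 0 ≤ (P ^ n).coeff i) ∧ 1 ≤ (P ^ n).coeff 0 ∧
      (∀ i, 2 ≤ i → i ≤ 3 * n → 1 ≤ (P ^ n).coeff i) := by
    intro n hn
    induction n with
    | zero => omega
    | succ m ih =>
      rcases Nat.lt_or_ge m 1 with h1 | hm
      · -- base case: m = 0
        interval_cases m
        refine ⟨?_, ?_, ?_⟩
        · intro i
          rw [pow_one, base]
          positivity
        · rw [pow_one, base]; norm_num; linarith
        · intro i h2 h3
          rw [pow_one, base]
          interval_cases i <;> norm_num <;> linarith
      · obtain ⟨hnn, h0, hpos⟩ := ih hm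
        have expand : ∀ i, (P ^ (m+1)).coeff i =
            m₃ * (if 3 ≤ i then (P^m).coeff (i-3) else 0)
          + m₂ * (if 2 ≤ i then (P^m).coeff (i-2) else 0)
          + m₀ * (P^m).coeff i := by
          intro i
          have h : P ^ (m+1) = C m₃ * (P^m) * X^3 + C m₂ * (P^m) * X^2
              + C m₀ * (P^m) := by
            rw [pow_succ, hP]; ring
          rw [h]
          simp [coeff_add, coeff_mul_X_pow', coeff_C_mul, mul_ite, mul_zero]
        have nn : ∀ i, 0 ≤ (P ^ (m+1)).coeff i := by
          intro i
          rw [expand]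
          have t1 : 0 ≤ (if 3 ≤ i then (P^m).coeff (i-3) else 0) := by
            split_ifs <;> first | exact hnn _ | exact le_rfl
          have t2 : 0 ≤ (if 2 ≤ i then (P^m).coeff (i-2) else 0) := by
            split_ifs <;> first | exact hnn _ | exact le_rfl
          have t3 := hnn i
          positivity
        refine ⟨nn, ?_, ?_⟩
        · rw [expand]
          norm_num
          nlinarith [hnn 0]
        · intro i h2 h3
          rw [expand]
          have t1 : 0 ≤ m₃ * (if 3 ≤ i then (P^m).coeff (i-3) else 0) := by
            have : 0 ≤ (if 3 ≤ i then (P^m).coeff (i-3) else 0) := by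
              split_ifs <;> first | exact hnn _ | exact le_rfl
            positivity
          have t2 : 0 ≤ m₂ * (if 2 ≤ i then (P^m).coeff (i-2) else 0) := by
            have : 0 ≤ (if 2 ≤ i then (P^m).coeff (i-2) else 0) := by
              split_ifs <;> first | exact hnn _ | exact le_rfl
            positivity
          have t3 : 0 ≤ m₀ * (P^m).coeff i := mul_nonneg hm₀' (hnn i)
          rcases Nat.lt_or_ge i (3*m+1) with hc | hc
          · -- i ≤ 3m : use third term
            have hc' : 1 ≤ (P^m).coeff i := hpos i h2 (by omega)
            nlinarith
          · rcases Nat.lt_or_ge i (3*m+3) with hc2 | hc2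
            · -- i = 3m+1 or 3m+2 : use second term
              have h2i : 2 ≤ i := h2
              have hif : (if 2 ≤ i then (P^m).coeff (i-2) else 0)
                  = (P^m).coeff (i-2) := if_pos h2i
              have hc' : 1 ≤ (P^m).coeff (i-2) := hpos (i-2) (by omega) (by omega)
              rw [hif] at t2 ⊢
              nlinarith
            · -- i = 3m+3 : use first term
              have hi3 : i = 3*m+3 := by omega
              have hif : (if 3 ≤ i then (P^m).coeff (i-3) else 0)
                  = (P^m).coeff (i-3) := if_pos (by omega)
              have hc' : 1 ≤ (P^m).coeff (i-3) := hpos (i-3) (by omega) (by omega)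
              rw [hif] at t1 ⊢
              nlinarith
  exact (key l hl).2.2
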